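/- Let K be a field and b, c ∈ K such that the Kubert-Tate curve E(b,c) has nonzero discriminant. Then the point (0,0) on E(b,c) has order exactly 7 if and only if b² − bc − c³ = 0. -/

import Mathlib

/-- The Kubert-Tate normal form curve E(b,c) : y^2 + (1-c)xy - by = x^3 - bx^2. -/
def Ebc {K : Type*} [CommRing K] (b c : K) : WeierstrassCurve.Affine K :=
  { a₁ := 1 - c, a₂ := -b, a₃ := -b, a₄ := 0, a₆ := 0 }
/-- The point (0, 0) on E(b,c), nonsingular since the discriminant is nonzero. -/
noncomputable def P₀ {K : Type*} [Field K] (b c : K) (hΔ : (Ebc b c).Δ ≠ 0) :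
    (Ebc b c).Point :=
  .some 0 0 ((WeierstrassCurve.Affine.equation_iff_nonsingular_of_Δ_ne_zero hΔ).mp
    (WeierstrassCurve.Affine.equation_zero.mpr rfl))

namespace EbcAux

open WeierstrassCurve.Affine WeierstrassCurve.Affine.Point

variable {K : Type*} [Field K]

@[simp] lemma a1 (b c : K) : (Ebc b c).a₁ = 1 - c := rfl
@[simp] lemma a2 (b c : K) : (Ebc b c).a₂ = -b := rfl
@[simp] lemma a3 (b c : K) : (Ebc b c).a₃ = -b := rfl
@[simp] lemma a4 (b c : K) : (Ebc b c).a₄ = 0 := rfl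
@[simp] lemma a6 (b c : K) : (Ebc b c).a₆ = 0 := rfl

lemma some_eq_some {W : WeierstrassCurve.Affine K} {x₁ y₁ x₂ y₂ : K}
    (h₁ : W.Nonsingular x₁ y₁) (h₂ : W.Nonsingular x₂ y₂) (hx : x₁ = x₂) (hy : y₁ = y₂) :
    Point.some _ _ h₁ = Point.some _ _ h₂ := by subst hx; subst hy; rfl

lemma b_ne_zero {b c : K} (hΔ : (Ebc b c).Δ ≠ 0) : b ≠ 0 := by
  rintro rfl
  apply hΔ
  simp [WeierstrassCurve.Δ, WeierstrassCurve.b₂, WeierstrassCurve.b₄, WeierstrassCurve.b₆,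
    WeierstrassCurve.b₈, Ebc]

end EbcAux

open Classical in
theorem stmt_8 {K : Type*} [Field K] (b c : K) (hΔ : (Ebc b c).Δ ≠ 0) :
    addOrderOf (P₀ b c hΔ) = 7 ↔ b ^ 2 - b * c - c ^ 3 = 0 := by
  open WeierstrassCurve.Affine WeierstrassCurve.Affine.Point EbcAux in
  set W := Ebc b c with hW
  have hb : b ≠ 0 := EbcAux.b_ne_zero hΔ
  set P := P₀ b c hΔ with hP
  have h0 : W.Nonsingular 0 0 :=
    (equation_iff_nonsingular_of_Δ_ne_zero hΔ).mp (WeierstrassCurve.Affine.equation_zero.mpr rfl)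
  have hQ2 : W.Nonsingular b (b * c) := by
    refine (equation_iff_nonsingular_of_Δ_ne_zero hΔ).mp ?_
    rw [equation_iff]; simp [hW]; ring
  have hQ3 : W.Nonsingular c (b - c) := by
    refine (equation_iff_nonsingular_of_Δ_ne_zero hΔ).mp ?_
    rw [equation_iff]; simp [hW]; ring
  have hPs : P = Point.some _ _ h0 := rfl
  -- 2P
  have hy00 : (0 : K) ≠ W.negY 0 0 := by simp [negY, hW, hb.symm]
  have h2 : P + P = Point.some _ _ hQ2 := by
    rw [hPs, add_self_of_Y_ne hy00]
    refine EbcAux.some_eq_some _ _ ?_ ?_ <;>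
      rw [slope_of_Y_ne rfl hy00] <;>
      simp only [negY, addY, negAddY, addX, hW, a1, a2, a3, a4, a6] <;>
      field_simp <;> ring
  -- 3P
  have hxb0 : b ≠ (0 : K) := hb
  have h3 : P + P + P = Point.some _ _ hQ3 := by
    rw [h2, hPs, add_of_X_ne hxb0]
    refine EbcAux.some_eq_some _ _ ?_ ?_ <;>
      rw [slope_of_X_ne hxb0] <;>
      simp only [negY, addY, negAddY, addX, hW, a1, a2, a3, a4, a6] <;>
      field_simp <;> ring
  have hmQ3 : W.Nonsingular c (c ^ 2) := by
    refine (equation_iff_nonsingular_of_Δ_ne_zero hΔ).mp ?_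
    rw [equation_iff]; simp [hW]; ring
  have hneg3 : -(P + P + P) = Point.some _ _ hmQ3 := by
    rw [h3, neg_some]
    exact EbcAux.some_eq_some _ _ rfl (by simp [negY, hW]; ring)
  have hPne : P ≠ 0 := by rw [hPs]; exact some_ne_zero h0
  by_cases hc : c = 0
  · -- order divides 4, RHS is b^2 ≠ 0
    subst hc
    have hy2 : b * 0 = W.negY b (b * 0) := by simp [negY, hW]
    have h4 : (4 : ℕ) • P = 0 := by
      have e : (4 : ℕ) • P = (P + P) + (P + P) := by abel
      rw [e, h2, add_of_Y_eq rfl hy2]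
    constructor
    · intro h7
      have := addOrderOf_dvd_of_nsmul_eq_zero h4
      rw [h7] at this
      norm_num at this
    · intro h
      exact absurd (by simpa using h) hb
  · -- main case
    have hnegY2 : W.negY b (b * c) = 0 := by simp [negY, hW]; ring
    have hy22 : b * c ≠ W.negY b (b * c) := by
      rw [hnegY2]; exact mul_ne_zero hb hc
    have hslope : W.slope b b (b * c) (b * c) = (b - c + c ^ 2) / c := by
      rw [slope_of_Y_ne rfl hy22, hnegY2]
      simp only [hW, a1, a2, a4]
      field_simp
      ring
    have hQ4 := nonsingular_add hQ2 hQ2 (fun h => hy22 h.2)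
    have h4 : (P + P) + (P + P) = Point.some _ _ hQ4 := by
      rw [h2, add_self_of_Y_ne hy22]
    have hkey : W.addX b b (W.slope b b (b * c) (b * c)) - c
        = (b ^ 2 - b * c - c ^ 3) / c ^ 2 := by
      rw [hslope]
      simp only [addX, hW, a1, a2]
      field_simp
      ring
    have h7iff : (7 : ℕ) • P = 0 ↔ Point.some _ _ hQ4 = Point.some _ _ hmQ3 := by
      have e : (7 : ℕ) • P = ((P + P) + (P + P)) + (P + P + P) := by abel
      rw [e, h4, h3, add_eq_zero_iff_eq_neg, ← h3, hneg3]
    have hord : addOrderOf P = 7 ↔ (7 : ℕ) • P = 0 := by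
      constructor
      · intro h; rw [← h]; exact addOrderOf_nsmul_eq_zero P
      · intro h
        have hdvd := addOrderOf_dvd_of_nsmul_eq_zero h
        rcases (Nat.Prime.eq_one_or_self_of_dvd (by norm_num) _ hdvd) with h1 | h7
        · exact absurd (AddMonoid.addOrderOf_eq_one_iff.mp h1) hPne
        · exact h7
    rw [hord, h7iff]
    constructor
    · intro h
      rw [Point.some.injEq] at h
      obtain ⟨hx, -⟩ := h
      rw [hx] at hkey
      field_simp at hkey
      linear_combination -hkey
    · intro h
      refine EbcAux.some_eq_some _ _ ?_ ?_
      · have := hkey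
        rw [h, zero_div] at this
        exact sub_eq_zero.mp this
      · rw [hslope]
        simp only [addY, negAddY, negY, addX, hW, a1, a2, a3]
        have hc' : c ≠ 0 := hc
        field_simp [hc']
        linear_combination (c ^ 2 - b) * h
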